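/- Under the bounded-gradient assumption and with F having L-Lipschitz gradient and global minimizer x*, the mini-batch gradient residual e at point x satisfies ‖e‖² ≤ 4((M_total - |B|)/M_total)²(β₁ + 2β₂L(F(x) - F(x*))). -/

import Mathlib

open intervalIntegral

lemma descent_lemma {n : ℕ}
    (F : EuclideanSpace ℝ (Fin n) → ℝ)
    (gF : EuclideanSpace ℝ (Fin n) → EuclideanSpace ℝ (Fin n))
    (hgF : ∀ x, HasGradientAt F (gF x) x)
    (L : ℝ) (hL : 0 < L)
    (hlip : ∀ x y, ‖gF x - gF y‖ ≤ L * ‖x - y‖)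
    (x y : EuclideanSpace ℝ (Fin n)) :
    F y ≤ F x + inner ℝ (gF x) (y - x) + L / 2 * ‖y - x‖ ^ 2 := by
  set v := y - x with hv
  have hgcont : Continuous gF := by
    have : LipschitzWith (Real.toNNReal L) gF :=
      LipschitzWith.of_dist_le_mul (fun a b => by
        simpa [dist_eq_norm, Real.coe_toNNReal _ hL.le] using hlip a b)
    exact this.continuous
  have hc : ∀ t : ℝ, HasDerivAt (fun t : ℝ => x + t • v) v t := by
    intro t
    simpa using ((hasDerivAt_id t).smul_const v).const_add x
  have hφ : ∀ t : ℝ, HasDerivAt (fun t : ℝ => F (x + t • v))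
      (inner ℝ (gF (x + t • v)) v : ℝ) t := by
    intro t
    have := ((hgF (x + t • v)).hasFDerivAt).comp_hasDerivAt t (hc t)
    exact this
  have hcont : Continuous (fun t : ℝ => (inner ℝ (gF (x + t • v)) v : ℝ)) := by
    exact Continuous.inner (hgcont.comp (by continuity)) continuous_const
  have hint : F y - F x = ∫ t in (0:ℝ)..1, (inner ℝ (gF (x + t • v)) v : ℝ) := by
    have := intervalIntegral.integral_eq_sub_of_hasDerivAt
      (fun t _ => hφ t) (hcont.intervalIntegrable 0 1)
    simp only [one_smul, zero_smul, add_zero] at this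
    have hxy : x + v = y := by rw [hv]; abel
    rw [this, hxy]
  have hmono : (∫ t in (0:ℝ)..1, (inner ℝ (gF (x + t • v)) v : ℝ)) ≤
      ∫ t in (0:ℝ)..1, ((inner ℝ (gF x) v : ℝ) + L * t * ‖v‖ ^ 2) := by
    apply intervalIntegral.integral_mono_on (by norm_num)
      (hcont.intervalIntegrable 0 1)
      ((by fun_prop : Continuous fun t : ℝ => (inner ℝ (gF x) v : ℝ) + L * t * ‖v‖ ^ 2).intervalIntegrable 0 1)
    intro t ht
    rcases Set.mem_Icc.mp ht with ⟨ht0, ht1⟩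
    have h1 : (inner ℝ (gF (x + t • v)) v : ℝ) =
        inner ℝ (gF x) v + inner ℝ (gF (x + t • v) - gF x) v := by
      rw [inner_sub_left]; ring
    rw [h1]
    have h2 : (inner ℝ (gF (x + t • v) - gF x) v : ℝ) ≤ L * t * ‖v‖ ^ 2 := by
      calc (inner ℝ (gF (x + t • v) - gF x) v : ℝ)
          ≤ ‖gF (x + t • v) - gF x‖ * ‖v‖ := real_inner_le_norm _ _
        _ ≤ (L * ‖x + t • v - x‖) * ‖v‖ := by
            apply mul_le_mul_of_nonneg_right (hlip _ _) (norm_nonneg _)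
        _ = L * t * ‖v‖ ^ 2 := by
            rw [add_sub_cancel_left, norm_smul, Real.norm_eq_abs, abs_of_nonneg ht0]
            ring
    linarith
  have hval : (∫ t in (0:ℝ)..1, ((inner ℝ (gF x) v : ℝ) + L * t * ‖v‖ ^ 2)) =
      (inner ℝ (gF x) v : ℝ) + L / 2 * ‖v‖ ^ 2 := by
    rw [intervalIntegral.integral_add intervalIntegrable_const
      ((by fun_prop : Continuous fun t : ℝ => L * t * ‖v‖ ^ 2).intervalIntegrable 0 1)]
    simp only [intervalIntegral.integral_const, smul_eq_mul]
    have : (∫ t in (0:ℝ)..1, L * t * ‖v‖ ^ 2) = L * ‖v‖ ^ 2 * ∫ t in (0:ℝ)..1, t := by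
      rw [← intervalIntegral.integral_const_mul]
      congr 1; ext t; ring
    rw [this, integral_id]
    ring
  linarith [hint, hmono, hval]

open Finset

lemma pl_bound {n : ℕ}
    (F : EuclideanSpace ℝ (Fin n) → ℝ)
    (gF : EuclideanSpace ℝ (Fin n) → EuclideanSpace ℝ (Fin n))
    (hgF : ∀ x, HasGradientAt F (gF x) x)
    (L : ℝ) (hL : 0 < L)
    (hlip : ∀ x y, ‖gF x - gF y‖ ≤ L * ‖x - y‖)
    (xs : EuclideanSpace ℝ (Fin n)) (hmin : ∀ z, F xs ≤ F z)
    (x : EuclideanSpace ℝ (Fin n)) :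
    ‖gF x‖ ^ 2 ≤ 2 * L * (F x - F xs) := by
  have h := descent_lemma F gF hgF L hL hlip x (x - L⁻¹ • gF x)
  have h1 : (x - L⁻¹ • gF x) - x = -(L⁻¹ • gF x) := by abel
  rw [h1] at h
  have h2 : (inner ℝ (gF x) (-(L⁻¹ • gF x)) : ℝ) = -(L⁻¹ * ‖gF x‖ ^ 2) := by
    rw [inner_neg_right, real_inner_smul_right, real_inner_self_eq_norm_sq]
  have h3 : ‖-(L⁻¹ • gF x)‖ ^ 2 = L⁻¹ ^ 2 * ‖gF x‖ ^ 2 := by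
    rw [norm_neg, norm_smul, Real.norm_eq_abs, abs_of_nonneg (by positivity : (0:ℝ) ≤ L⁻¹)]
    ring
  rw [h2, h3] at h
  have h4 := hmin (x - L⁻¹ • gF x)
  have hLne : L ≠ 0 := hL.ne'
  have key : F xs ≤ F x - (2 * L)⁻¹ * ‖gF x‖ ^ 2 := by
    have : F x + -(L⁻¹ * ‖gF x‖ ^ 2) + L / 2 * (L⁻¹ ^ 2 * ‖gF x‖ ^ 2)
        = F x - (2 * L)⁻¹ * ‖gF x‖ ^ 2 := by field_simp; ring
    linarith [this ▸ h]
  have : (2 * L)⁻¹ * ‖gF x‖ ^ 2 ≤ F x - F xs := by linarith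
  calc ‖gF x‖ ^ 2 = 2 * L * ((2 * L)⁻¹ * ‖gF x‖ ^ 2) := by field_simp
    _ ≤ 2 * L * (F x - F xs) := by
        apply mul_le_mul_of_nonneg_left this (by positivity)

/-- Residual bound in terms of the optimality gap:
`‖e‖² ≤ 4((M - |B|)/M)² (β₁ + 2β₂ L (F x - F x*))`. -/
theorem residual_bound_opt_gap {n M : ℕ} (hM : 0 < M)
    (f : Fin M → EuclideanSpace ℝ (Fin n) → ℝ)
    (F : EuclideanSpace ℝ (Fin n) → ℝ)
    (hF : ∀ x, F x = (1 / (M : ℝ)) * ∑ m, f m x)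
    (gf : Fin M → EuclideanSpace ℝ (Fin n) → EuclideanSpace ℝ (Fin n))
    (gF : EuclideanSpace ℝ (Fin n) → EuclideanSpace ℝ (Fin n))
    (hgf : ∀ m x, HasGradientAt (f m) (gf m x) x)
    (hgF : ∀ x, HasGradientAt F (gF x) x)
    (β₁ β₂ : ℝ) (hβ₁ : 0 ≤ β₁) (hβ₂ : 0 ≤ β₂)
    (hbound : ∀ m x, ‖gf m x‖ ^ 2 ≤ β₁ + β₂ * ‖gF x‖ ^ 2)
    (L : ℝ) (hL : 0 < L)
    (hlip : ∀ x y, ‖gF x - gF y‖ ≤ L * ‖x - y‖)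
    (xs : EuclideanSpace ℝ (Fin n)) (hmin : ∀ z, F xs ≤ F z)
    (B : Finset (Fin M)) (hB : B.Nonempty)
    (x : EuclideanSpace ℝ (Fin n)) :
    ‖(((M : ℝ) - B.card) / ((M : ℝ) * B.card)) • (∑ i ∈ B, gf i x)
        - ((M : ℝ))⁻¹ • (∑ i ∈ Bᶜ, gf i x)‖ ^ 2 ≤
      4 * (((M : ℝ) - B.card) / (M : ℝ)) ^ 2 *
        (β₁ + 2 * β₂ * L * (F x - F xs)) := by
  have hPL := pl_bound F gF hgF L hL hlip xs hmin x
  set k : ℝ := (B.card : ℝ) with hkdef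
  have hk : 0 < k := by rw [hkdef]; exact_mod_cast Finset.card_pos.mpr hB
  have hkM : k ≤ (M : ℝ) := by
    have := Finset.card_le_univ B
    simp only [Finset.card_univ, Fintype.card_fin] at this
    rw [hkdef]; exact_mod_cast this
  have hMpos : (0:ℝ) < M := by exact_mod_cast hM
  set G : ℝ := Real.sqrt (β₁ + β₂ * ‖gF x‖ ^ 2) with hGdef
  have hGnn : 0 ≤ G := Real.sqrt_nonneg _
  have hG2 : G ^ 2 = β₁ + β₂ * ‖gF x‖ ^ 2 := Real.sq_sqrt (by positivity)
  have hnf : ∀ i, ‖gf i x‖ ≤ G := by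
    intro i
    calc ‖gf i x‖ = Real.sqrt (‖gf i x‖ ^ 2) := (Real.sqrt_sq (norm_nonneg _)).symm
      _ ≤ G := Real.sqrt_le_sqrt (hbound i x)
  have hSB : ‖∑ i ∈ B, gf i x‖ ≤ k * G := by
    calc ‖∑ i ∈ B, gf i x‖ ≤ ∑ i ∈ B, ‖gf i x‖ := norm_sum_le _ _
      _ ≤ ∑ _i ∈ B, G := Finset.sum_le_sum (fun i _ => hnf i)
      _ = k * G := by rw [Finset.sum_const, nsmul_eq_mul]
  have hcardc : ((Bᶜ : Finset (Fin M)).card : ℝ) = (M : ℝ) - k := by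
    rw [Finset.card_compl, Fintype.card_fin]
    rw [Nat.cast_sub (by rw [hkdef] at hkM; exact_mod_cast hkM), hkdef]
  have hSN : ‖∑ i ∈ Bᶜ, gf i x‖ ≤ ((M : ℝ) - k) * G := by
    calc ‖∑ i ∈ Bᶜ, gf i x‖ ≤ ∑ i ∈ Bᶜ, ‖gf i x‖ := norm_sum_le _ _
      _ ≤ ∑ _i ∈ Bᶜ, G := Finset.sum_le_sum (fun i _ => hnf i)
      _ = ((M : ℝ) - k) * G := by rw [Finset.sum_const, nsmul_eq_mul, hcardc]
  have hc1 : (0:ℝ) ≤ ((M : ℝ) - k) / ((M : ℝ) * k) := by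
    apply div_nonneg (by linarith) (by positivity)
  have he : ‖(((M : ℝ) - k) / ((M : ℝ) * k)) • (∑ i ∈ B, gf i x)
      - ((M : ℝ))⁻¹ • (∑ i ∈ Bᶜ, gf i x)‖ ≤ 2 * (((M : ℝ) - k) / (M : ℝ)) * G := by
    calc ‖(((M : ℝ) - k) / ((M : ℝ) * k)) • (∑ i ∈ B, gf i x)
          - ((M : ℝ))⁻¹ • (∑ i ∈ Bᶜ, gf i x)‖
        ≤ ‖(((M : ℝ) - k) / ((M : ℝ) * k)) • (∑ i ∈ B, gf i x)‖
          + ‖((M : ℝ))⁻¹ • (∑ i ∈ Bᶜ, gf i x)‖ := norm_sub_le _ _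
      _ = (((M : ℝ) - k) / ((M : ℝ) * k)) * ‖∑ i ∈ B, gf i x‖
          + (M : ℝ)⁻¹ * ‖∑ i ∈ Bᶜ, gf i x‖ := by
          rw [norm_smul, norm_smul, Real.norm_eq_abs, Real.norm_eq_abs,
            abs_of_nonneg hc1, abs_of_nonneg (by positivity : (0:ℝ) ≤ (M:ℝ)⁻¹)]
      _ ≤ (((M : ℝ) - k) / ((M : ℝ) * k)) * (k * G)
          + (M : ℝ)⁻¹ * (((M : ℝ) - k) * G) := by
          gcongr
      _ = 2 * (((M : ℝ) - k) / (M : ℝ)) * G := by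
          field_simp
          ring
  have hsq : ‖(((M : ℝ) - k) / ((M : ℝ) * k)) • (∑ i ∈ B, gf i x)
      - ((M : ℝ))⁻¹ • (∑ i ∈ Bᶜ, gf i x)‖ ^ 2
      ≤ (2 * (((M : ℝ) - k) / (M : ℝ)) * G) ^ 2 :=
    pow_le_pow_left₀ (norm_nonneg _) he 2
  have hfin : (2 * (((M : ℝ) - k) / (M : ℝ)) * G) ^ 2
      ≤ 4 * (((M : ℝ) - k) / (M : ℝ)) ^ 2 * (β₁ + 2 * β₂ * L * (F x - F xs)) := by
    have h1 : (2 * (((M : ℝ) - k) / (M : ℝ)) * G) ^ 2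
        = 4 * (((M : ℝ) - k) / (M : ℝ)) ^ 2 * (β₁ + β₂ * ‖gF x‖ ^ 2) := by
      rw [mul_pow, mul_pow, hG2]; ring
    rw [h1]
    apply mul_le_mul_of_nonneg_left _ (by positivity)
    nlinarith [mul_le_mul_of_nonneg_left hPL hβ₂]
  exact hsq.trans hfin
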